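/- Let p, q > 1 be real numbers with 1/p + 1/q = 1. Then for all x, y₁, y₂ ∈ ℝ² with x ≠ y₁ and x ≠ y₂, one has |K(x − y₁) − K(x − y₂)| ≤ 2^{1/p} · |y₁ − y₂|^{1/q} / (2π · min(|x − y₁|, |x − y₂|)^{2 − 1/p}). -/

import Mathlib

open MeasureTheory

noncomputable section

abbrev E2 : Type := EuclideanSpace ℝ (Fin 2)

/-- The planar Biot–Savart kernel `K(z) = z⊥ / (2π|z|²)`, where `z⊥ = (-z₂, z₁)`.
(With the junk-value convention `(0 : ℝ)⁻¹ = 0`, this gives `K 0 = 0`.) -/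
def K (z : E2) : E2 :=
  (2 * Real.pi * ‖z‖ ^ 2)⁻¹ • (WithLp.equiv 2 (Fin 2 → ℝ)).symm ![-(z 1), z 0]

lemma norm_sq_E2 (a : E2) : ‖a‖ ^ 2 = a 0 ^ 2 + a 1 ^ 2 := by
  rw [EuclideanSpace.norm_eq]
  rw [Real.sq_sqrt (by positivity)]
  simp [Fin.sum_univ_two, sq_abs]

lemma K_sub_norm (a b : E2) (ha : a ≠ 0) (hb : b ≠ 0) :
    ‖K a - K b‖ = ‖a - b‖ / (2 * Real.pi * (‖a‖ * ‖b‖)) := by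
  have hna : 0 < ‖a‖ := norm_pos_iff.mpr ha
  have hnb : 0 < ‖b‖ := norm_pos_iff.mpr hb
  have hpi := Real.pi_pos
  have hA : ‖a‖ ^ 2 = a 0 ^ 2 + a 1 ^ 2 := norm_sq_E2 a
  have hB : ‖b‖ ^ 2 = b 0 ^ 2 + b 1 ^ 2 := norm_sq_E2 b
  have ha2 : (0:ℝ) < a 0 ^ 2 + a 1 ^ 2 := hA ▸ (by positivity)
  have hb2 : (0:ℝ) < b 0 ^ 2 + b 1 ^ 2 := hB ▸ (by positivity)
  have h1 : ‖K a - K b‖ ^ 2 = (‖a - b‖ / (2 * Real.pi * (‖a‖ * ‖b‖))) ^ 2 := by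
    have hD : ‖a - b‖ ^ 2 = (a 0 - b 0) ^ 2 + (a 1 - b 1) ^ 2 := by
      rw [norm_sq_E2 (a - b)]; simp [PiLp.sub_apply]
    have hc : ∀ i : Fin 2, (K a - K b) i =
        (2 * Real.pi * ‖a‖ ^ 2)⁻¹ * (![-(a 1), a 0] i)
          - (2 * Real.pi * ‖b‖ ^ 2)⁻¹ * (![-(b 1), b 0] i) := by
      intro i; simp [K, WithLp.equiv_symm_apply, PiLp.toLp_apply]
    rw [norm_sq_E2 (K a - K b), hc 0, hc 1]
    simp only [div_pow, mul_pow]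
    rw [hA, hB, hD]
    simp only [Matrix.cons_val_zero, Matrix.cons_val_one, Matrix.head_cons]
    field_simp
    ring
  have h2 : (0:ℝ) ≤ ‖a - b‖ / (2 * Real.pi * (‖a‖ * ‖b‖)) := by positivity
  rw [← Real.sqrt_sq (norm_nonneg _), h1, Real.sqrt_sq h2]

theorem K_difference_holder_bound (p q : ℝ) (hp : 1 < p) (hq : 1 < q)
    (hpq : 1 / p + 1 / q = 1) (x y₁ y₂ : E2) (h₁ : x ≠ y₁) (h₂ : x ≠ y₂) :
    ‖K (x - y₁) - K (x - y₂)‖ ≤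
      2 ^ (1 / p) * ‖y₁ - y₂‖ ^ (1 / q) /
        (2 * Real.pi * min ‖x - y₁‖ ‖x - y₂‖ ^ (2 - 1 / p)) := by
  set a := x - y₁ with hadef
  set b := x - y₂ with hbdef
  have ha : a ≠ 0 := sub_ne_zero.mpr h₁
  have hb : b ≠ 0 := sub_ne_zero.mpr h₂
  have hna : 0 < ‖a‖ := norm_pos_iff.mpr ha
  have hnb : 0 < ‖b‖ := norm_pos_iff.mpr hb
  have hpi := Real.pi_pos
  set m := min ‖a‖ ‖b‖ with hmdef
  have hm : 0 < m := lt_min hna hnb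
  have hma : m ≤ ‖a‖ := min_le_left _ _
  have hmb : m ≤ ‖b‖ := min_le_right _ _
  set d := ‖y₁ - y₂‖ with hddef
  have hd0 : 0 ≤ d := norm_nonneg _
  have habd : ‖a - b‖ = d := by
    rw [hadef, hbdef, hddef, show x - y₁ - (x - y₂) = y₂ - y₁ by abel, norm_sub_rev]
  set D := ‖K a - K b‖ with hDdef
  have hD0 : 0 ≤ D := norm_nonneg _
  have key : D = d / (2 * Real.pi * (‖a‖ * ‖b‖)) := by
    rw [hDdef, K_sub_norm a b ha hb, habd]
  have bound1 : D ≤ 2 / (2 * Real.pi * m) := by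
    rw [key, div_le_div_iff₀ (by positivity) (by positivity)]
    have hdab : d ≤ ‖a‖ + ‖b‖ := by rw [← habd]; exact norm_sub_le a b
    have t1 : d * (2 * Real.pi * m) ≤ (‖a‖ + ‖b‖) * (2 * Real.pi * m) :=
      mul_le_mul_of_nonneg_right hdab (by positivity)
    have t2 : 2 * Real.pi * (‖a‖ * m) ≤ 2 * Real.pi * (‖a‖ * ‖b‖) :=
      mul_le_mul_of_nonneg_left (mul_le_mul_of_nonneg_left hmb hna.le) (by positivity)
    have t3 : 2 * Real.pi * (‖b‖ * m) ≤ 2 * Real.pi * (‖b‖ * ‖a‖) :=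
      mul_le_mul_of_nonneg_left (mul_le_mul_of_nonneg_left hma hnb.le) (by positivity)
    nlinarith [t1, t2, t3]
  have bound2 : D ≤ d / (2 * Real.pi * m ^ 2) := by
    rw [key]
    apply div_le_div_of_nonneg_left hd0 (by positivity)
    have : m * m ≤ ‖a‖ * ‖b‖ := mul_le_mul hma hmb hm.le hna.le
    nlinarith
  have hp1 : 0 < 1 / p := by positivity
  have hq1 : 0 < 1 / q := by positivity
  have hsplit : D = D ^ (1 / p) * D ^ (1 / q) := by
    rw [← Real.rpow_add' hD0 (by rw [hpq]; norm_num), hpq, Real.rpow_one]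
  have step1 : D ^ (1 / p) ≤ (2 / (2 * Real.pi * m)) ^ (1 / p) :=
    Real.rpow_le_rpow hD0 bound1 hp1.le
  have step2 : D ^ (1 / q) ≤ (d / (2 * Real.pi * m ^ 2)) ^ (1 / q) :=
    Real.rpow_le_rpow hD0 bound2 hq1.le
  have hexp : 1 / p + 2 * (1 / q) = 2 - 1 / p := by
    have h : 1 / q = 1 - 1 / p := by linarith
    rw [h]; ring
  have key2 : (2 / (2 * Real.pi * m)) ^ (1 / p) * (d / (2 * Real.pi * m ^ 2)) ^ (1 / q)
      = 2 ^ (1 / p) * d ^ (1 / q) / (2 * Real.pi * m ^ (2 - 1 / p)) := by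
    rw [Real.div_rpow (by norm_num : (0:ℝ) ≤ 2) (by positivity : (0:ℝ) ≤ 2 * Real.pi * m),
        Real.div_rpow hd0 (by positivity : (0:ℝ) ≤ 2 * Real.pi * m ^ 2),
        Real.mul_rpow (show (0:ℝ) ≤ 2 * Real.pi by positivity) hm.le,
        Real.mul_rpow (show (0:ℝ) ≤ 2 * Real.pi by positivity) (by positivity : (0:ℝ) ≤ m ^ 2),
        ← Real.rpow_natCast m 2, ← Real.rpow_mul hm.le]
    push_cast
    rw [div_mul_div_comm]
    congr 1
    have h2pi : (2 * Real.pi) ^ (1 / p) * (2 * Real.pi) ^ (1 / q) = 2 * Real.pi := by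
      rw [← Real.rpow_add (by positivity), hpq, Real.rpow_one]
    have hmm : m ^ (1 / p) * m ^ ((2:ℝ) * (1 / q)) = m ^ (2 - 1 / p) := by
      rw [← Real.rpow_add hm, hexp]
    calc (2 * Real.pi) ^ (1 / p) * m ^ (1 / p) * ((2 * Real.pi) ^ (1 / q) * m ^ ((2:ℝ) * (1 / q)))
        = ((2 * Real.pi) ^ (1 / p) * (2 * Real.pi) ^ (1 / q)) * (m ^ (1 / p) * m ^ ((2:ℝ) * (1 / q))) := by ring
      _ = 2 * Real.pi * m ^ (2 - 1 / p) := by rw [h2pi, hmm]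
  calc D = D ^ (1 / p) * D ^ (1 / q) := hsplit
    _ ≤ (2 / (2 * Real.pi * m)) ^ (1 / p) * (d / (2 * Real.pi * m ^ 2)) ^ (1 / q) :=
        mul_le_mul step1 step2 (Real.rpow_nonneg hD0 _) (Real.rpow_nonneg (by positivity) _)
    _ = 2 ^ (1 / p) * d ^ (1 / q) / (2 * Real.pi * m ^ (2 - 1 / p)) := key2

end
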